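/- In the hard instance ℳ𝒢_θ, assume 𝒜_{p,θ} = {a : θ_a = p} is nonempty and let μ*_θ(a|s) = 1{a ∈ 𝒜_{p,θ}}/|𝒜_{p,θ}| and ν*_θ(b|s) = 1{b=0} for all s. Then (μ*_θ, ν*_θ) is a Nash equilibrium of ℳ𝒢_θ, and moreover max{ sup_{μ,s,a,b} min{d^{μ,ν*_θ}(s,a,b;ρ), 1/(S(A+B))}/d_b(s,a,b), sup_{ν,s,a,b} min{d^{μ*_θ,ν}(s,a,b;ρ), 1/(S(A+B))}/d_b(s,a,b) } = C*_clipped (convention 0/0 = 0); hence {ℳ𝒢_θ, ρ, d_b} belongs to the class 𝖬𝖦(C*_clipped). -/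

import Mathlib

open scoped BigOperators ENNReal Classical

noncomputable section

namespace ZSMG

variable {𝒮 𝒜 ℬ : Type} [Fintype 𝒮] [Fintype 𝒜] [Fintype ℬ]
  [DecidableEq 𝒮] [DecidableEq 𝒜] [DecidableEq ℬ]

/-- Expectation of `V : 𝒮 → ℝ` under the (sub)probability vector `p`. -/
def Pexp (p V : 𝒮 → ℝ) : ℝ := ∑ s', p s' * V s'

/-- Variance of `V` under `p`: `Var_p(V) = p(V∘V) − (pV)²`. -/
def varP (p V : 𝒮 → ℝ) : ℝ := Pexp p (fun s => V s * V s) - (Pexp p V) ^ 2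

/-- Payoff of mixed strategies `w, z` in the matrix game `M`. -/
def pay (M : 𝒜 → ℬ → ℝ) (w : 𝒜 → ℝ) (z : ℬ → ℝ) : ℝ :=
  ∑ a, ∑ b, w a * z b * M a b

/-- Value function associated with a Q-function: minimax value at each state. -/
def valQ (Q : 𝒮 → 𝒜 → ℬ → ℝ) (s : 𝒮) : ℝ :=
  ⨆ w : stdSimplex ℝ 𝒜, ⨅ z : stdSimplex ℝ ℬ, pay (Q s) w.1 z.1

/-- Sup norm over states. -/
def supNormS (f : 𝒮 → ℝ) : ℝ := ⨆ s, |f s|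

/-- Sup norm over state-action triples. -/
def supNormQ (f : 𝒮 → 𝒜 → ℬ → ℝ) : ℝ := ⨆ s, ⨆ a, ⨆ b, |f s a b|

/-- The Bernstein-style penalty `β(s,a,b;V)`; `n` is the count `N(s,a,b)` and
`p` is the row `P̂(·|s,a,b)` of the empirical kernel. -/
def penalty (γ δ Cb : ℝ) (N n : ℕ) (p V : 𝒮 → ℝ) : ℝ :=
  (if n = 0 then 1 / (1 - γ)
   else
     min
       (max (Real.sqrt (Cb * Real.log ((N : ℝ) / ((1 - γ) * δ)) * varP p V / (n : ℝ)))
         (2 * Cb * Real.log ((N : ℝ) / ((1 - γ) * δ)) / ((1 - γ) * (n : ℝ))))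
       (1 / (1 - γ))) + 4 / (N : ℝ)

/-- The pessimistic Bellman operator for the max-player. -/
def TpeMinus (γ δ Cb : ℝ) (N : ℕ) (n : 𝒮 → 𝒜 → ℬ → ℕ)
    (Ph : 𝒮 → 𝒜 → ℬ → 𝒮 → ℝ) (rh : 𝒮 → 𝒜 → ℬ → ℝ)
    (Q : 𝒮 → 𝒜 → ℬ → ℝ) : 𝒮 → 𝒜 → ℬ → ℝ := fun s a b =>
  max (rh s a b + γ * Pexp (Ph s a b) (valQ Q)
        - penalty γ δ Cb N (n s a b) (Ph s a b) (valQ Q)) 0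

/-- The pessimistic Bellman operator for the min-player. -/
def TpePlus (γ δ Cb : ℝ) (N : ℕ) (n : 𝒮 → 𝒜 → ℬ → ℕ)
    (Ph : 𝒮 → 𝒜 → ℬ → 𝒮 → ℝ) (rh : 𝒮 → 𝒜 → ℬ → ℝ)
    (Q : 𝒮 → 𝒜 → ℬ → ℝ) : 𝒮 → 𝒜 → ℬ → ℝ := fun s a b =>
  min (rh s a b + γ * Pexp (Ph s a b) (valQ Q)
        + penalty γ δ Cb N (n s a b) (Ph s a b) (valQ Q)) (1 / (1 - γ))

/-- Count `N(s,a,b)` of occurrences of `(s,a,b)` in the dataset `D`. -/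
def cnt {N : ℕ} (D : Fin N → 𝒮 × 𝒜 × ℬ × 𝒮) (s : 𝒮) (a : 𝒜) (b : ℬ) : ℕ :=
  (Finset.univ.filter fun i => (D i).1 = s ∧ (D i).2.1 = a ∧ (D i).2.2.1 = b).card

/-- Count of full transitions `(s,a,b,s')` in the dataset `D`. -/
def cntT {N : ℕ} (D : Fin N → 𝒮 × 𝒜 × ℬ × 𝒮) (s : 𝒮) (a : 𝒜) (b : ℬ) (s' : 𝒮) : ℕ :=
  (Finset.univ.filter fun i => D i = (s, a, b, s')).card

/-- Empirical transition kernel `P̂(·|s,a,b)` built from the dataset. -/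
def Phat {N : ℕ} (D : Fin N → 𝒮 × 𝒜 × ℬ × 𝒮) (s : 𝒮) (a : 𝒜) (b : ℬ) : 𝒮 → ℝ := fun s' =>
  if cnt D s a b = 0 then ((Fintype.card 𝒮 : ℝ))⁻¹
  else (cntT D s a b s' : ℝ) / (cnt D s a b : ℝ)

/-- Empirical reward `r̂` built from the dataset. -/
def rhat {N : ℕ} (r : 𝒮 → 𝒜 → ℬ → ℝ) (D : Fin N → 𝒮 × 𝒜 × ℬ × 𝒮)
    (s : 𝒮) (a : 𝒜) (b : ℬ) : ℝ :=
  if cnt D s a b = 0 then 0 else r s a b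

/-- Number of iterations `T = ⌈log(N/(1−γ))/log(1/γ)⌉` of VI-LCB-Game. -/
def Titer (γ : ℝ) (N : ℕ) : ℕ := ⌈Real.log ((N : ℝ) / (1 - γ)) / Real.log (1 / γ)⌉₊

/-- `Q_pe^− = Q⁻_T` produced by VI-LCB-Game on the dataset `D`. -/
def QpeMinus (γ δ Cb : ℝ) (r : 𝒮 → 𝒜 → ℬ → ℝ) {N : ℕ}
    (D : Fin N → 𝒮 × 𝒜 × ℬ × 𝒮) : 𝒮 → 𝒜 → ℬ → ℝ :=
  (TpeMinus γ δ Cb N (cnt D) (Phat D) (rhat r D))^[Titer γ N] (fun _ _ _ => 0)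

/-- `Q_pe^+ = Q⁺_T` produced by VI-LCB-Game on the dataset `D`. -/
def QpePlus (γ δ Cb : ℝ) (r : 𝒮 → 𝒜 → ℬ → ℝ) {N : ℕ}
    (D : Fin N → 𝒮 × 𝒜 × ℬ × 𝒮) : 𝒮 → 𝒜 → ℬ → ℝ :=
  (TpePlus γ δ Cb N (cnt D) (Phat D) (rhat r D))^[Titer γ N] (fun _ _ _ => 1 / (1 - γ))

/-- `(w,z)` is a (mixed) Nash equilibrium / saddle point of the matrix game `M`. -/
def IsMatrixNash (M : 𝒜 → ℬ → ℝ) (w : 𝒜 → ℝ) (z : ℬ → ℝ) : Prop :=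
  w ∈ stdSimplex ℝ 𝒜 ∧ z ∈ stdSimplex ℝ ℬ ∧
    (∀ w' ∈ stdSimplex ℝ 𝒜, pay M w' z ≤ pay M w z) ∧
    (∀ z' ∈ stdSimplex ℝ ℬ, pay M w z ≤ pay M w z')

/-- `μ` is a possible max-player output of the algorithm, given the final Q-estimate `Q`. -/
def IsOutputMax (Q : 𝒮 → 𝒜 → ℬ → ℝ) (μ : 𝒮 → 𝒜 → ℝ) : Prop :=
  ∀ s, ∃ z, IsMatrixNash (Q s) (μ s) z

/-- `ν` is a possible min-player output of the algorithm, given the final Q-estimate `Q`. -/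
def IsOutputMin (Q : 𝒮 → 𝒜 → ℬ → ℝ) (ν : 𝒮 → ℬ → ℝ) : Prop :=
  ∀ s, ∃ w, IsMatrixNash (Q s) w (ν s)

/-- `μ` is a stationary (Markov) policy. -/
def IsPolicy (μ : 𝒮 → 𝒜 → ℝ) : Prop := ∀ s, μ s ∈ stdSimplex ℝ 𝒜

/-- `P` is a probability transition kernel. -/
def IsKernel (P : 𝒮 → 𝒜 → ℬ → 𝒮 → ℝ) : Prop := ∀ s a b, P s a b ∈ stdSimplex ℝ 𝒮

/-- `r` is a reward function with values in `[0,1]`. -/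
def IsReward (r : 𝒮 → 𝒜 → ℬ → ℝ) : Prop := ∀ s a b, r s a b ∈ Set.Icc (0 : ℝ) 1

/-- `d` is a probability distribution over `𝒮 × 𝒜 × ℬ`. -/
def IsDist3 (d : 𝒮 → 𝒜 → ℬ → ℝ) : Prop :=
  (∀ s a b, 0 ≤ d s a b) ∧ (∑ s, ∑ a, ∑ b, d s a b) = 1

/-- Transition matrix `P^{μ,ν}` of the product policy `μ × ν`. -/
def Pmat (P : 𝒮 → 𝒜 → ℬ → 𝒮 → ℝ) (μ : 𝒮 → 𝒜 → ℝ) (ν : 𝒮 → ℬ → ℝ) :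
    Matrix 𝒮 𝒮 ℝ :=
  Matrix.of fun s s' => ∑ a, ∑ b, μ s a * ν s b * P s a b s'

/-- Reward vector `r^{μ,ν}` of the product policy `μ × ν`. -/
def rPol (r : 𝒮 → 𝒜 → ℬ → ℝ) (μ : 𝒮 → 𝒜 → ℝ) (ν : 𝒮 → ℬ → ℝ) : 𝒮 → ℝ :=
  fun s => ∑ a, ∑ b, μ s a * ν s b * r s a b

/-- Value function `V^{μ,ν} = (I − γP^{μ,ν})⁻¹ r^{μ,ν}`. -/
def Vpol (γ : ℝ) (P : 𝒮 → 𝒜 → ℬ → 𝒮 → ℝ) (r : 𝒮 → 𝒜 → ℬ → ℝ)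
    (μ : 𝒮 → 𝒜 → ℝ) (ν : 𝒮 → ℬ → ℝ) : 𝒮 → ℝ :=
  Matrix.mulVec ((1 : Matrix 𝒮 𝒮 ℝ) - γ • Pmat P μ ν)⁻¹ (rPol r μ ν)

/-- `V^{μ,⋆}(s) = min_ν V^{μ,ν}(s)`. -/
def VmuStar (γ : ℝ) (P : 𝒮 → 𝒜 → ℬ → 𝒮 → ℝ) (r : 𝒮 → 𝒜 → ℬ → ℝ)
    (μ : 𝒮 → 𝒜 → ℝ) : 𝒮 → ℝ := fun s =>
  ⨅ ν : {ν : 𝒮 → ℬ → ℝ // IsPolicy ν}, Vpol γ P r μ ν.1 s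

/-- `V^{⋆,ν}(s) = max_μ V^{μ,ν}(s)`. -/
def VstarNu (γ : ℝ) (P : 𝒮 → 𝒜 → ℬ → 𝒮 → ℝ) (r : 𝒮 → 𝒜 → ℬ → ℝ)
    (ν : 𝒮 → ℬ → ℝ) : 𝒮 → ℝ := fun s =>
  ⨆ μ : {μ : 𝒮 → 𝒜 → ℝ // IsPolicy μ}, Vpol γ P r μ.1 ν s

/-- `Q^{μ,ν}(s,a,b) = r(s,a,b) + γ P(·|s,a,b) V^{μ,ν}`. -/
def Qpol (γ : ℝ) (P : 𝒮 → 𝒜 → ℬ → 𝒮 → ℝ) (r : 𝒮 → 𝒜 → ℬ → ℝ)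
    (μ : 𝒮 → 𝒜 → ℝ) (ν : 𝒮 → ℬ → ℝ) : 𝒮 → 𝒜 → ℬ → ℝ := fun s a b =>
  r s a b + γ * Pexp (P s a b) (Vpol γ P r μ ν)

/-- `Q^{μ,⋆}(s,a,b) = min_ν Q^{μ,ν}(s,a,b)`. -/
def QmuStar (γ : ℝ) (P : 𝒮 → 𝒜 → ℬ → 𝒮 → ℝ) (r : 𝒮 → 𝒜 → ℬ → ℝ)
    (μ : 𝒮 → 𝒜 → ℝ) : 𝒮 → 𝒜 → ℬ → ℝ := fun s a b =>
  ⨅ ν : {ν : 𝒮 → ℬ → ℝ // IsPolicy ν}, Qpol γ P r μ ν.1 s a b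

/-- `Q^{⋆,ν}(s,a,b) = max_μ Q^{μ,ν}(s,a,b)`. -/
def QstarNu (γ : ℝ) (P : 𝒮 → 𝒜 → ℬ → 𝒮 → ℝ) (r : 𝒮 → 𝒜 → ℬ → ℝ)
    (ν : 𝒮 → ℬ → ℝ) : 𝒮 → 𝒜 → ℬ → ℝ := fun s a b =>
  ⨆ μ : {μ : 𝒮 → 𝒜 → ℝ // IsPolicy μ}, Qpol γ P r μ.1 ν s a b

/-- `(μs, νs)` is a Nash equilibrium of the Markov game. -/
def IsNashPair (γ : ℝ) (P : 𝒮 → 𝒜 → ℬ → 𝒮 → ℝ) (r : 𝒮 → 𝒜 → ℬ → ℝ)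
    (μs : 𝒮 → 𝒜 → ℝ) (νs : 𝒮 → ℬ → ℝ) : Prop :=
  IsPolicy μs ∧ IsPolicy νs ∧
    (∀ μ, IsPolicy μ → ∀ s, Vpol γ P r μ νs s ≤ Vpol γ P r μs νs s) ∧
    (∀ ν, IsPolicy ν → ∀ s, Vpol γ P r μs νs s ≤ Vpol γ P r μs ν s)

/-- `V(ρ) = Σ_s ρ(s) V(s)`. -/
def wAvg (ρ V : 𝒮 → ℝ) : ℝ := ∑ s, ρ s * V s

/-- Discounted occupancy measure `d^{μ,ν}(s;ρ) = (1−γ) ρᵀ(I−γP^{μ,ν})⁻¹`. -/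
def dOcc (γ : ℝ) (P : 𝒮 → 𝒜 → ℬ → 𝒮 → ℝ) (μ : 𝒮 → 𝒜 → ℝ) (ν : 𝒮 → ℬ → ℝ)
    (ρ : 𝒮 → ℝ) : 𝒮 → ℝ := fun s =>
  (1 - γ) * Matrix.vecMul ρ ((1 : Matrix 𝒮 𝒮 ℝ) - γ • Pmat P μ ν)⁻¹ s

/-- `d^{μ,ν}(s,a,b;ρ) = d^{μ,ν}(s;ρ) μ(a|s) ν(b|s)`. -/
def dOcc3 (γ : ℝ) (P : 𝒮 → 𝒜 → ℬ → 𝒮 → ℝ) (μ : 𝒮 → 𝒜 → ℝ) (ν : 𝒮 → ℬ → ℝ)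
    (ρ : 𝒮 → ℝ) : 𝒮 → 𝒜 → ℬ → ℝ := fun s a b =>
  dOcc γ P μ ν ρ s * μ s a * ν s b

/-- Clipped unilateral concentrability coefficient `C⋆_clipped` (in `ℝ≥0∞`;
note that in `ℝ≥0∞` one has `x/0 = ∞` for `x ≠ 0` and `0/0 = 0`, matching the
convention of the paper). -/
def clipCoeff (γ : ℝ) (P : 𝒮 → 𝒜 → ℬ → 𝒮 → ℝ) (ρ : 𝒮 → ℝ) (d : 𝒮 → 𝒜 → ℬ → ℝ)
    (μs : 𝒮 → 𝒜 → ℝ) (νs : 𝒮 → ℬ → ℝ) : ℝ≥0∞ :=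
  max
    (⨆ (μ : {μ : 𝒮 → 𝒜 → ℝ // IsPolicy μ}) (s : 𝒮) (a : 𝒜) (b : ℬ),
      ENNReal.ofReal
          (min (dOcc3 γ P μ.1 νs ρ s a b)
            ((Fintype.card 𝒮 * (Fintype.card 𝒜 + Fintype.card ℬ) : ℝ))⁻¹) /
        ENNReal.ofReal (d s a b))
    (⨆ (ν : {ν : 𝒮 → ℬ → ℝ // IsPolicy ν}) (s : 𝒮) (a : 𝒜) (b : ℬ),
      ENNReal.ofReal
          (min (dOcc3 γ P μs ν.1 ρ s a b)
            ((Fintype.card 𝒮 * (Fintype.card 𝒜 + Fintype.card ℬ) : ℝ))⁻¹) /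
        ENNReal.ofReal (d s a b))

/-- Probability weight of an individual dataset under `(d_b, P)`. -/
def dsWeight {N : ℕ} (d : 𝒮 → 𝒜 → ℬ → ℝ) (P : 𝒮 → 𝒜 → ℬ → 𝒮 → ℝ)
    (D : Fin N → 𝒮 × 𝒜 × ℬ × 𝒮) : ℝ :=
  ∏ i, d (D i).1 (D i).2.1 (D i).2.2.1 * P (D i).1 (D i).2.1 (D i).2.2.1 (D i).2.2.2

/-- Probability of an event over the offline dataset. -/
def dsProb {N : ℕ} (d : 𝒮 → 𝒜 → ℬ → ℝ) (P : 𝒮 → 𝒜 → ℬ → 𝒮 → ℝ)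
    (E : Set (Fin N → 𝒮 × 𝒜 × ℬ × 𝒮)) : ℝ :=
  ∑ D : Fin N → 𝒮 × 𝒜 × ℬ × 𝒮, E.indicator (dsWeight d P) D

/-- Expectation of a function of the offline dataset. -/
def dsExp {N : ℕ} (d : 𝒮 → 𝒜 → ℬ → ℝ) (P : 𝒮 → 𝒜 → ℬ → 𝒮 → ℝ)
    (g : (Fin N → 𝒮 × 𝒜 × ℬ × 𝒮) → ℝ) : ℝ :=
  ∑ D : Fin N → 𝒮 × 𝒜 × ℬ × 𝒮, dsWeight d P D * g D

/-- Dirac (deterministic) policy for the min-player. -/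
def diracB (f : 𝒮 → ℬ) : 𝒮 → ℬ → ℝ := fun s b => if b = f s then 1 else 0

/-- Binomial pmf. -/
def binomPMF (n : ℕ) (p : ℝ) (k : ℕ) : ℝ :=
  (n.choose k : ℝ) * p ^ k * (1 - p) ^ (n - k)

/-- Probability of a set of outcomes under a `Binomial(n,p)` distribution. -/
def binomProb (n : ℕ) (p : ℝ) (E : Set ℕ) : ℝ :=
  ∑ k ∈ Finset.range (n + 1), E.indicator (binomPMF n p) k

/-- Weight of an i.i.d. sample from a distribution on a finite set. -/
def iidWeight {𝒳 : Type} {N : ℕ} (d : 𝒳 → ℝ) (ω : Fin N → 𝒳) : ℝ := ∏ i, d (ω i)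

/-- Probability of an event for `N` i.i.d. draws from `d`. -/
def iidProb {𝒳 : Type} [Fintype 𝒳] {N : ℕ} (d : 𝒳 → ℝ) (E : Set (Fin N → 𝒳)) : ℝ :=
  ∑ ω : Fin N → 𝒳, E.indicator (iidWeight d) ω

/-- Number of occurrences of `x` in the sample `ω`. -/
def iidCount {𝒳 : Type} [DecidableEq 𝒳] {N : ℕ} (ω : Fin N → 𝒳) (x : 𝒳) : ℕ :=
  (Finset.univ.filter fun i => ω i = x).card

/-- Transition kernel of the hard instance `ℳ𝒢_θ`. -/
def hardP {S A B : ℕ} (θ : Fin A → ℝ) : Fin S → Fin A → Fin B → Fin S → ℝ :=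
  fun s a b s' =>
    if s.val = 0 ∧ b.val = 0 then
      θ a * (if s'.val = 0 then 1 else 0) + (1 - θ a) * (if s'.val = 1 then 1 else 0)
    else if s' = s then 1 else 0

/-- Reward of the hard instance: `r(s,a,b) = 1{s = 0}`. -/
def hardR {S A B : ℕ} : Fin S → Fin A → Fin B → ℝ := fun s _ _ => if s.val = 0 then 1 else 0

end ZSMG

namespace ZSHard
open ZSMG

variable {S A B : ℕ}

/-- Explicit one-parameter transition matrix of the hard instance. -/
def Emat (S : ℕ) (x : ℝ) : Matrix (Fin S) (Fin S) ℝ :=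
  Matrix.of fun s s' =>
    if s.val = 0 then (if s'.val = 0 then x else if s'.val = 1 then 1 - x else 0)
    else if s' = s then 1 else 0

lemma pmat_eq {θ : Fin A → ℝ} {μ : Fin S → Fin A → ℝ} {ν : Fin S → Fin B → ℝ}
    (hμ : IsPolicy μ) (hν : IsPolicy ν)
    (s0 : Fin S) (hs0 : s0.val = 0) (b0 : Fin B) (hb0 : b0.val = 0)
    (x : ℝ) (hx : x = 1 - ν s0 b0 * (1 - ∑ a, μ s0 a * θ a)) :
    Pmat (hardP θ) μ ν = Emat S x := by
  ext s s'
  simp only [Pmat, Matrix.of_apply, Emat]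
  by_cases hs : s.val = 0
  · -- s = s0
    have hss0 : s = s0 := Fin.ext (hs.trans hs0.symm)
    subst hss0
    set I0 : ℝ := if s'.val = 0 then 1 else 0 with hI0
    set I1 : ℝ := if s'.val = 1 then 1 else 0 with hI1
    have h1 : ∀ a b, hardP θ s a b s'
        = I0 + (if b = b0 then 1 else 0) * ((θ a - 1) * I0 + (1 - θ a) * I1) := by
      intro a b
      by_cases hbb : b = b0
      · have hbv : b.val = 0 := by rw [hbb]; exact hb0
        simp only [hardP, hs, hbv, and_self, if_true, if_pos hbb, hI0, hI1]
        ring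
      · have hbv : ¬ b.val = 0 := fun h => hbb (Fin.ext (h.trans hb0.symm))
        have hcond : ¬ (s.val = 0 ∧ b.val = 0) := fun h => hbv h.2
        have hss : (s' = s) ↔ (s'.val = 0) := by
          constructor
          · intro h; rw [h]; exact hs
          · intro h; exact Fin.ext (h.trans hs.symm)
        simp only [hardP, if_neg hcond, if_neg hbb, zero_mul, add_zero, hI0]
        by_cases h0 : s'.val = 0 <;> simp [hss, h0]
    have h2 : ∀ a : Fin A, (∑ b, μ s a * ν s b * hardP θ s a b s')
        = μ s a * I0 + μ s a * ν s b0 * ((θ a - 1) * I0 + (1 - θ a) * I1) := by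
      intro a
      have hsplit : ∀ b : Fin B, μ s a * ν s b * hardP θ s a b s'
          = μ s a * (ν s b * I0)
            + (if b = b0 then μ s a * ν s b0 * ((θ a - 1) * I0 + (1 - θ a) * I1) else 0) := by
        intro b
        rw [h1 a b]
        by_cases hb : b = b0 <;> simp [hb] <;> ring
      rw [Finset.sum_congr rfl fun b _ => hsplit b, Finset.sum_add_distrib,
        Finset.sum_ite_eq' Finset.univ b0, if_pos (Finset.mem_univ b0), ← Finset.mul_sum,
        ← Finset.sum_mul, (hν s).2]
      ring
    rw [Finset.sum_congr rfl fun a _ => h2 a, Finset.sum_add_distrib, ← Finset.sum_mul,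
      (hμ s).2]
    have h3 : (∑ a, μ s a * ν s b0 * ((θ a - 1) * I0 + (1 - θ a) * I1))
        = ν s b0 * (((∑ a, μ s a * θ a) - 1) * I0 + (1 - (∑ a, μ s a * θ a)) * I1) := by
      have hterm : ∀ a : Fin A, μ s a * ν s b0 * ((θ a - 1) * I0 + (1 - θ a) * I1)
          = ν s b0 * ((I0 - I1) * (μ s a * θ a)) + ν s b0 * ((I1 - I0) * μ s a) := by
        intro a; ring
      rw [Finset.sum_congr rfl fun a _ => hterm a, Finset.sum_add_distrib,
        ← Finset.mul_sum, ← Finset.mul_sum, ← Finset.mul_sum, ← Finset.mul_sum, (hμ s).2]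
      ring
    rw [h3, if_pos hs, hI0, hI1, hx]
    split_ifs with h0 h1' <;> (first | ring1 | (exfalso; omega))
  · have h1 : ∀ (a : Fin A) (b : Fin B), hardP θ s a b s' = if s' = s then 1 else 0 := by
      intro a b
      have : ¬ (s.val = 0 ∧ b.val = 0) := fun h => hs h.1
      simp [hardP, this]
    rw [Finset.sum_congr rfl fun a _ => Finset.sum_congr rfl fun b _ => by rw [h1 a b]]
    rw [if_neg hs]
    by_cases h2 : s' = s
    · simp only [if_pos h2, mul_one]
      rw [Finset.sum_congr rfl fun a _ => by rw [← Finset.mul_sum, (hν s).2, mul_one],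
        (hμ s).2]
    · simp [h2]

lemma emat_triangular (γ x : ℝ) :
    ((1 : Matrix (Fin S) (Fin S) ℝ) - γ • Emat S x).BlockTriangular id := by
  intro i j h
  have hij : ¬ (j = i) := fun hh => absurd (hh ▸ rfl) (ne_of_gt h)
  have hi : ¬ (i.val = 0) := by
    have : (j : Fin S) < i := h
    have := Fin.lt_iff_val_lt_val.mp this
    omega
  have hij' : ¬ i = j := fun hh => hij hh.symm
  simp [Matrix.sub_apply, Matrix.one_apply, Emat, hi, hij, hij']

lemma isUnit_one_sub_emat {γ x : ℝ} (hγ0 : 0 ≤ γ) (hγ1 : γ < 1) (hx0 : 0 ≤ x) (hx1 : x ≤ 1) :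
    IsUnit ((1 : Matrix (Fin S) (Fin S) ℝ) - γ • Emat S x).det := by
  rw [Matrix.det_of_upperTriangular (emat_triangular γ x)]
  rw [isUnit_iff_ne_zero]
  apply Finset.prod_ne_zero_iff.mpr
  intro s _
  have hd : ((1 : Matrix (Fin S) (Fin S) ℝ) - γ • Emat S x) s s
      = 1 - γ * (if s.val = 0 then x else 1) := by
    by_cases hs : s.val = 0 <;> simp [Matrix.sub_apply, Matrix.one_apply, Emat, hs]
  rw [hd]
  by_cases hs : s.val = 0
  · rw [if_pos hs]
    nlinarith
  · rw [if_neg hs]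
    nlinarith

lemma one_sub_gx_pos {γ x : ℝ} (hγ0 : 0 ≤ γ) (hγ1 : γ < 1) (hx0 : 0 ≤ x) (hx1 : x ≤ 1) :
    0 < 1 - γ * x := by nlinarith

lemma rpol_eq {μ : Fin S → Fin A → ℝ} {ν : Fin S → Fin B → ℝ}
    (hμ : IsPolicy μ) (hν : IsPolicy ν) :
    rPol (hardR (S := S) (A := A) (B := B)) μ ν
      = fun s => if s.val = 0 then (1 : ℝ) else 0 := by
  funext s
  simp only [rPol, hardR]
  by_cases hs : s.val = 0
  · rw [if_pos hs]
    have h1 : ∀ a : Fin A, (∑ b, μ s a * ν s b * (1:ℝ)) = μ s a := by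
      intro a
      simp only [mul_one]
      rw [← Finset.mul_sum, (hν s).2, mul_one]
    rw [Finset.sum_congr rfl fun a _ => h1 a, (hμ s).2]
  · rw [if_neg hs]
    simp [hs]

lemma vpol_eq {θ : Fin A → ℝ} {μ : Fin S → Fin A → ℝ} {ν : Fin S → Fin B → ℝ}
    (hμ : IsPolicy μ) (hν : IsPolicy ν) {γ x : ℝ}
    (hγ0 : 0 ≤ γ) (hγ1 : γ < 1) (hx0 : 0 ≤ x) (hx1 : x ≤ 1)
    (hP : Pmat (hardP θ) μ ν = Emat S x)
    (s0 : Fin S) (hs0 : s0.val = 0) :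
    Vpol γ (hardP θ) hardR μ ν = fun s => if s.val = 0 then (1 - γ * x)⁻¹ else 0 := by
  have hdet := isUnit_one_sub_emat (S := S) hγ0 hγ1 hx0 hx1
  have hpos := one_sub_gx_pos hγ0 hγ1 hx0 hx1
  set M := (1 : Matrix (Fin S) (Fin S) ℝ) - γ • Emat S x with hM
  set V : Fin S → ℝ := fun s => if s.val = 0 then (1 - γ * x)⁻¹ else 0 with hV
  have hVs : ∀ s' : Fin S, V s' = if s' = s0 then (1 - γ * x)⁻¹ else 0 := by
    intro s'
    simp only [hV]
    by_cases h : s'.val = 0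
    · rw [if_pos h, if_pos (Fin.ext (h.trans hs0.symm))]
    · rw [if_neg h, if_neg (fun hh : s' = s0 => h (by rw [hh]; exact hs0))]
  have key : M.mulVec V = rPol hardR μ ν := by
    funext s
    rw [rpol_eq hμ hν]
    have e1 : M.mulVec V s = ∑ s', M s s' * V s' := rfl
    show M.mulVec V s = if s.val = 0 then (1:ℝ) else 0
    rw [e1, Finset.sum_congr rfl (fun s' _ => by
      rw [hVs s']
      by_cases h : s' = s0
      · rw [if_pos h, if_pos h, h]
      · rw [if_neg h, if_neg h, mul_zero]
      : ∀ s' ∈ Finset.univ, M s s' * V s'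
          = if s' = s0 then M s s0 * (1 - γ * x)⁻¹ else 0),
      Finset.sum_ite_eq' Finset.univ s0, if_pos (Finset.mem_univ _)]
    by_cases hs : s.val = 0
    · have hss : s = s0 := Fin.ext (hs.trans hs0.symm)
      have hM00 : M s s0 = 1 - γ * x := by
        rw [hss]
        simp [hM, Matrix.sub_apply, Matrix.one_apply, Emat, hs0]
      rw [hM00, if_pos hs, mul_inv_cancel₀ hpos.ne']
    · have hne : ¬ (s = s0) := fun hh => hs (by rw [hh]; exact hs0)
      have hne' : ¬ (s0 = s) := fun hh => hne hh.symm
      have hMs0 : M s s0 = 0 := by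
        simp [hM, Matrix.sub_apply, Matrix.one_apply, Emat, hs, hne, hne', hs0]
      rw [hMs0, if_neg hs, zero_mul]
  rw [Vpol, hP, ← hM, ← key, Matrix.mulVec_mulVec, Matrix.nonsing_inv_mul M hdet,
    Matrix.one_mulVec]

lemma docc_eq {θ : Fin A → ℝ} {μ : Fin S → Fin A → ℝ} {ν : Fin S → Fin B → ℝ}
    {γ x : ℝ}
    (hγ0 : 0 ≤ γ) (hγ1 : γ < 1) (hx0 : 0 ≤ x) (hx1 : x ≤ 1)
    (hP : Pmat (hardP θ) μ ν = Emat S x)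
    (s0 : Fin S) (hs0 : s0.val = 0) (s1 : Fin S) (hs1 : s1.val = 1) :
    dOcc γ (hardP θ) μ ν (fun s => if s.val = 0 then (1:ℝ) else 0)
      = fun s => if s.val = 0 then (1 - γ) * (1 - γ * x)⁻¹
          else if s.val = 1 then γ * (1 - x) * (1 - γ * x)⁻¹ else 0 := by
  have hdet := isUnit_one_sub_emat (S := S) hγ0 hγ1 hx0 hx1
  have hpos := one_sub_gx_pos hγ0 hγ1 hx0 hx1
  have hγpos : 0 < 1 - γ := by linarith
  have hs01 : s0 ≠ s1 := fun h => by rw [h, hs1] at hs0; exact one_ne_zero hs0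
  set M := (1 : Matrix (Fin S) (Fin S) ℝ) - γ • Emat S x with hM
  set c0 : ℝ := (1 - γ * x)⁻¹ with hc0
  set c1 : ℝ := γ * (1 - x) * ((1 - γ * x)⁻¹ * (1 - γ)⁻¹) with hc1
  set u : Fin S → ℝ := fun s => if s.val = 0 then c0 else if s.val = 1 then c1 else 0
    with hu
  have hMrow0 : ∀ s' : Fin S, M s0 s' = (if s0 = s' then 1 else 0)
      - γ * (if s'.val = 0 then x else if s'.val = 1 then 1 - x else 0) := by
    intro s'
    simp [hM, Matrix.sub_apply, Matrix.one_apply, Emat, hs0]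
  have hMrow1 : ∀ s' : Fin S, M s1 s' = (if s1 = s' then 1 else 0)
      - γ * (if s' = s1 then 1 else 0) := by
    intro s'
    have h1 : ¬ (s1.val = 0) := by omega
    simp [hM, Matrix.sub_apply, Matrix.one_apply, Emat, h1]
  have key : Matrix.vecMul u M = (fun s : Fin S => if s.val = 0 then (1:ℝ) else 0) := by
    funext s'
    have e1 : Matrix.vecMul u M s' = ∑ s, u s * M s s' := rfl
    show Matrix.vecMul u M s' = if s'.val = 0 then (1:ℝ) else 0
    have e2 : ∀ s : Fin S, u s * M s s'
        = (if s = s0 then c0 * M s0 s' else 0) + (if s = s1 then c1 * M s1 s' else 0) := by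
      intro s
      by_cases h0 : s = s0
      · rw [if_pos h0, if_neg (h0 ▸ hs01 : ¬ s = s1)]
        have : u s0 = c0 := by simp [hu, hs0]
        rw [h0, this, add_zero]
      · by_cases h1 : s = s1
        · have hv1 : ¬ (s1.val = 0) := by omega
          have : u s1 = c1 := by simp [hu, hs1, hv1]
          rw [if_neg h0, if_pos h1, h1, this, zero_add]
        · have hv0 : ¬ (s.val = 0) := fun hh => h0 (Fin.ext (hh.trans hs0.symm))
          have hv1 : ¬ (s.val = 1) := fun hh => h1 (Fin.ext (hh.trans hs1.symm))
          have : u s = 0 := by simp [hu, hv0, hv1]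
          rw [if_neg h0, if_neg h1, this, zero_mul, add_zero]
    rw [e1, Finset.sum_congr rfl fun s _ => e2 s, Finset.sum_add_distrib,
      Finset.sum_ite_eq' Finset.univ s0, Finset.sum_ite_eq' Finset.univ s1,
      if_pos (Finset.mem_univ _), if_pos (Finset.mem_univ _), hMrow0 s', hMrow1 s']
    by_cases h0 : s'.val = 0
    · have hq0 : s0 = s' := (Fin.ext (h0.trans hs0.symm)).symm
      have hq1 : ¬ (s1 = s') := fun hh => by rw [← hh] at h0; omega
      have hq2 : ¬ (s' = s1) := fun hh => hq1 hh.symm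
      have hq3 : ¬ (s'.val = 1) := by omega
      rw [if_pos hq0, if_pos h0, if_neg hq1, if_neg hq2, if_pos h0, hc0]
      field_simp
      ring
    · by_cases h1 : s'.val = 1
      · have hq0 : ¬ (s0 = s') := fun hh => by rw [← hh] at h1; omega
        have hq1 : s1 = s' := (Fin.ext (h1.trans hs1.symm)).symm
        have hq2 : s' = s1 := hq1.symm
        rw [if_neg hq0, if_neg h0, if_pos h1, if_pos hq1, if_pos hq2, if_neg h0, hc0, hc1]
        field_simp
        ring
      · have hq0 : ¬ (s0 = s') := fun hh => by rw [← hh] at h0; omega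
        have hq1 : ¬ (s1 = s') := fun hh => by rw [← hh] at h1; omega
        have hq2 : ¬ (s' = s1) := fun hh => hq1 hh.symm
        rw [if_neg hq0, if_neg h0, if_neg h1, if_neg hq1, if_neg hq2, if_neg h0]
        ring
  have hv : Matrix.vecMul (fun s : Fin S => if s.val = 0 then (1:ℝ) else 0) M⁻¹ = u := by
    rw [← key, Matrix.vecMul_vecMul, Matrix.mul_nonsing_inv M hdet, Matrix.vecMul_one]
  funext s
  rw [dOcc, hP, ← hM, hv]
  by_cases h0 : s.val = 0
  · have : u s = c0 := by simp [hu, h0]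
    rw [this, if_pos h0, hc0]
  · rw [if_neg h0]
    by_cases h1 : s.val = 1
    · have : u s = c1 := by simp [hu, h0, h1]
      rw [this, if_pos h1, hc1, hc0]
      field_simp
    · have : u s = 0 := by simp [hu, h0, h1]
      rw [this, if_neg h1, mul_zero]

lemma xval_mem {θ : Fin A → ℝ} {μ : Fin S → Fin A → ℝ} {ν : Fin S → Fin B → ℝ}
    (hμ : IsPolicy μ) (hν : IsPolicy ν)
    (hθ0 : ∀ a, 0 ≤ θ a) (hθ1 : ∀ a, θ a ≤ 1)
    (s0 : Fin S) (b0 : Fin B) :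
    0 ≤ 1 - ν s0 b0 * (1 - ∑ a, μ s0 a * θ a)
      ∧ 1 - ν s0 b0 * (1 - ∑ a, μ s0 a * θ a) ≤ 1 := by
  have ht0 : 0 ≤ ν s0 b0 := (hν s0).1 b0
  have ht1 : ν s0 b0 ≤ 1 := by
    have := Finset.single_le_sum (fun b _ => (hν s0).1 b) (Finset.mem_univ b0)
    rw [(hν s0).2] at this
    exact this
  have hm0 : 0 ≤ ∑ a, μ s0 a * θ a :=
    Finset.sum_nonneg fun a _ => mul_nonneg ((hμ s0).1 a) (hθ0 a)
  have hm1 : (∑ a, μ s0 a * θ a) ≤ 1 := by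
    calc (∑ a, μ s0 a * θ a) ≤ ∑ a, μ s0 a :=
        Finset.sum_le_sum fun a _ => by
          nlinarith [(hμ s0).1 a, hθ1 a]
    _ = 1 := (hμ s0).2
  constructor <;> nlinarith

lemma term_le (hS : 2 ≤ S) (hA : 2 ≤ A) (hB : 2 ≤ B)
    {γ : ℝ} (hγ0 : 0 ≤ γ) (hγ1 : γ < 1)
    {θ : Fin A → ℝ} (hθ0 : ∀ a, 0 ≤ θ a) (hθ1 : ∀ a, θ a ≤ 1)
    {μ : Fin S → Fin A → ℝ} {ν : Fin S → Fin B → ℝ}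
    (hμ : IsPolicy μ) (hν : IsPolicy ν)
    {C : ℝ} (hC : 2 * (A : ℝ) * (B : ℝ) / ((S : ℝ) * ((A : ℝ) + (B : ℝ))) ≤ C)
    (s : Fin S) (a : Fin A) (b : Fin B) :
    ENNReal.ofReal
        (min (dOcc3 γ (hardP θ) μ ν (fun s : Fin S => if s.val = 0 then 1 else 0) s a b)
          ((S : ℝ) * ((A : ℝ) + (B : ℝ)))⁻¹) /
      ENNReal.ofReal
        (if s.val = 0 then (C * (S : ℝ) * ((A : ℝ) + (B : ℝ)))⁻¹
         else if s.val = 1 then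
           (1 - (A : ℝ) * (B : ℝ) / (C * (S : ℝ) * ((A : ℝ) + (B : ℝ)))) / ((A : ℝ) * (B : ℝ))
         else 0) ≤ ENNReal.ofReal C := by
  have hS0 : (0:ℕ) < S := by omega
  have hS1 : (1:ℕ) < S := by omega
  set s0 : Fin S := ⟨0, hS0⟩ with hs0def
  set s1 : Fin S := ⟨1, hS1⟩ with hs1def
  have hs0 : s0.val = 0 := rfl
  have hs1 : s1.val = 1 := rfl
  set b0 : Fin B := ⟨0, by omega⟩ with hb0def
  have hb0 : b0.val = 0 := rfl
  set x : ℝ := 1 - ν s0 b0 * (1 - ∑ a, μ s0 a * θ a) with hxdef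
  obtain ⟨hx0, hx1⟩ := xval_mem hμ hν hθ0 hθ1 s0 b0
  rw [← hxdef] at hx0 hx1
  have hP := pmat_eq hμ hν s0 hs0 b0 hb0 x hxdef
  have hd := docc_eq hγ0 hγ1 hx0 hx1 hP s0 hs0 s1 hs1
  -- basic positivity
  have hSR : (2:ℝ) ≤ (S:ℝ) := by exact_mod_cast hS
  have hAR : (2:ℝ) ≤ (A:ℝ) := by exact_mod_cast hA
  have hBR : (2:ℝ) ≤ (B:ℝ) := by exact_mod_cast hB
  have hden : (0:ℝ) < (S:ℝ) * ((A:ℝ) + (B:ℝ)) := by nlinarith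
  have hABpos : (0:ℝ) < (A:ℝ) * (B:ℝ) := by nlinarith
  have hCpos : (0:ℝ) < C := lt_of_lt_of_le (by positivity) hC
  have hKpos : (0:ℝ) < ((S:ℝ) * ((A:ℝ) + (B:ℝ)))⁻¹ := by positivity
  have h2AB : 2 * ((A:ℝ) * (B:ℝ)) ≤ C * ((S:ℝ) * ((A:ℝ) + (B:ℝ))) := by
    have := (div_le_iff₀ hden).mp hC
    linarith
  rw [dOcc3, hd]
  beta_reduce
  by_cases h0 : s.val = 0
  · simp only [if_pos h0]
    have hdb : (0:ℝ) < (C * (S:ℝ) * ((A:ℝ) + (B:ℝ)))⁻¹ := by positivity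
    refine le_trans (ENNReal.div_le_div_right
      (ENNReal.ofReal_le_ofReal (min_le_right _ _)) _) ?_
    rw [← ENNReal.ofReal_div_of_pos hdb]
    apply ENNReal.ofReal_le_ofReal
    rw [div_eq_mul_inv, inv_inv]
    have heq : ((S:ℝ) * ((A:ℝ) + (B:ℝ)))⁻¹ * (C * (S:ℝ) * ((A:ℝ) + (B:ℝ))) = C := by
      field_simp
    rw [heq]
  · simp only [if_neg h0]
    by_cases h1 : s.val = 1
    · simp only [if_pos h1]
      have hfrac : (A:ℝ) * (B:ℝ) / (C * (S:ℝ) * ((A:ℝ) + (B:ℝ))) < 1 := by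
        rw [div_lt_one (by nlinarith)]
        nlinarith
      have hdb1 : (0:ℝ) < (1 - (A:ℝ) * (B:ℝ) / (C * (S:ℝ) * ((A:ℝ) + (B:ℝ)))) / ((A:ℝ) * (B:ℝ)) := by
        apply div_pos (by linarith) hABpos
      refine le_trans (ENNReal.div_le_div_right
        (ENNReal.ofReal_le_ofReal (min_le_right _ _)) _) ?_
      rw [← ENNReal.ofReal_div_of_pos hdb1]
      apply ENNReal.ofReal_le_ofReal
      rw [div_le_iff₀ hdb1]
      rw [← mul_div_assoc, le_div_iff₀ hABpos]
      have hexp : C * (1 - (A:ℝ) * (B:ℝ) / (C * (S:ℝ) * ((A:ℝ) + (B:ℝ))))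
          = C - (A:ℝ) * (B:ℝ) / ((S:ℝ) * ((A:ℝ) + (B:ℝ))) := by
        field_simp
      rw [hexp]
      have hABK : (A:ℝ) * (B:ℝ) / ((S:ℝ) * ((A:ℝ) + (B:ℝ)))
          = ((S:ℝ) * ((A:ℝ) + (B:ℝ)))⁻¹ * ((A:ℝ) * (B:ℝ)) := by ring
      have h2 : 2 * ((A:ℝ) * (B:ℝ)) / ((S:ℝ) * ((A:ℝ) + (B:ℝ))) ≤ C := by
        calc 2 * ((A:ℝ) * (B:ℝ)) / ((S:ℝ) * ((A:ℝ) + (B:ℝ)))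
            = 2 * (A:ℝ) * (B:ℝ) / ((S:ℝ) * ((A:ℝ) + (B:ℝ))) := by ring_nf
        _ ≤ C := hC
      rw [hABK]
      rw [div_le_iff₀ hden] at h2
      have hmul := mul_le_mul_of_nonneg_left h2 hKpos.le
      have hfin : ((S:ℝ)*((A:ℝ)+(B:ℝ)))⁻¹ * (C*((S:ℝ)*((A:ℝ)+(B:ℝ)))) = C := by
        field_simp
      nlinarith [hmul, hfin]
    · simp only [if_neg h1]
      rw [zero_mul, zero_mul, min_eq_left hKpos.le, ENNReal.ofReal_zero, ENNReal.zero_div]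
      exact zero_le

lemma mustar_policy {θ : Fin A → ℝ} {P : ℝ}
    (hAp : (Finset.univ.filter fun a : Fin A => θ a = P).Nonempty) :
    IsPolicy (fun (_ : Fin S) (a : Fin A) => if θ a = P then
      ((Finset.univ.filter fun a' : Fin A => θ a' = P).card : ℝ)⁻¹ else 0) := by
  have hk : ((Finset.univ.filter fun a' : Fin A => θ a' = P).card : ℝ) ≠ 0 :=
    Nat.cast_ne_zero.mpr (Finset.card_pos.mpr hAp).ne'
  intro s
  constructor
  · intro a
    dsimp only
    split
    · positivity
    · exact le_refl 0
  · dsimp only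
    rw [← Finset.sum_filter, Finset.sum_const, nsmul_eq_mul, mul_inv_cancel₀ hk]

lemma mustar_avg {θ : Fin A → ℝ} {P : ℝ}
    (hAp : (Finset.univ.filter fun a : Fin A => θ a = P).Nonempty) :
    (∑ a, (if θ a = P then
      ((Finset.univ.filter fun a' : Fin A => θ a' = P).card : ℝ)⁻¹ else 0) * θ a) = P := by
  set k : ℝ := ((Finset.univ.filter fun a' : Fin A => θ a' = P).card : ℝ) with hkdef
  have hk : k ≠ 0 := Nat.cast_ne_zero.mpr (Finset.card_pos.mpr hAp).ne'
  have hcongr : ∀ a : Fin A, (if θ a = P then k⁻¹ else 0) * θ a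
      = if θ a = P then k⁻¹ * P else 0 := by
    intro a
    by_cases h : θ a = P
    · rw [if_pos h, if_pos h, h]
    · rw [if_neg h, if_neg h, zero_mul]
  rw [Finset.sum_congr rfl fun a _ => hcongr a, ← Finset.sum_filter, Finset.sum_const,
    nsmul_eq_mul, ← hkdef, ← mul_assoc, mul_inv_cancel₀ hk, one_mul]

lemma nustar_policy (hB : 0 < B) :
    IsPolicy (fun (_ : Fin S) (b : Fin B) => if b.val = 0 then (1:ℝ) else 0) := by
  intro s
  constructor
  · intro b
    dsimp only
    split <;> norm_num
  · dsimp only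
    have hcond : ∀ b : Fin B, (if b.val = 0 then (1:ℝ) else 0)
        = if b = ⟨0, hB⟩ then 1 else 0 := by
      intro b
      by_cases h : b.val = 0
      · rw [if_pos h, if_pos (Fin.ext h)]
      · rw [if_neg h, if_neg (fun hh : b = ⟨0, hB⟩ => h (by rw [hh]))]
    rw [Finset.sum_congr rfl fun b _ => hcond b,
      Finset.sum_ite_eq' Finset.univ (⟨0, hB⟩ : Fin B) (fun _ => (1:ℝ)),
      if_pos (Finset.mem_univ _)]

lemma dirac_policy (a0 : Fin A) :
    IsPolicy (fun (_ : Fin S) (a : Fin A) => if a = a0 then (1:ℝ) else 0) := by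
  intro s
  constructor
  · intro a
    dsimp only
    split <;> norm_num
  · dsimp only
    rw [Finset.sum_ite_eq' Finset.univ a0 (fun _ => (1:ℝ)), if_pos (Finset.mem_univ _)]

lemma dirac_avg {θ : Fin A → ℝ} (a0 : Fin A) (s : Fin S) :
    (∑ a, (if a = a0 then (1:ℝ) else 0) * θ a) = θ a0 := by
  have hcongr : ∀ a : Fin A, (if a = a0 then (1:ℝ) else 0) * θ a
      = if a = a0 then θ a else 0 := by
    intro a
    by_cases h : a = a0
    · rw [if_pos h, if_pos h, one_mul]
    · rw [if_neg h, if_neg h, zero_mul]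
  rw [Finset.sum_congr rfl fun a _ => hcongr a, Finset.sum_ite_eq' Finset.univ a0 θ,
    if_pos (Finset.mem_univ _)]

end ZSHard


set_option maxHeartbeats 2000000 in
open ZSMG in
/-- `(μ*_θ, ν*_θ)` is a Nash equilibrium of the hard instance
`ℳ𝒢_θ`, and the clipped unilateral concentrability coefficient of
`{ℳ𝒢_θ, ρ, d_b}` equals `C`. -/
theorem statement11 (S A B : ℕ) (hS : 2 ≤ S) (hA : 2 ≤ A) (hB : 2 ≤ B)
    (γ ε : ℝ) (hγl : 2 / 3 ≤ γ) (hγu : γ < 1)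
    (hε0 : 0 < ε) (hε1 : ε ≤ 1 / (42 * (1 - γ)))
    (θ : Fin A → ℝ)
    (hθ : ∀ a, θ a = γ + 14 * (1 - γ) ^ 2 * ε / γ ∨ θ a = γ - 14 * (1 - γ) ^ 2 * ε / γ)
    (hAp : (Finset.univ.filter fun a : Fin A => θ a = γ + 14 * (1 - γ) ^ 2 * ε / γ).Nonempty)
    (C : ℝ) (hC : 2 * (A : ℝ) * (B : ℝ) / ((S : ℝ) * ((A : ℝ) + (B : ℝ))) ≤ C) :
    IsNashPair γ (hardP θ : Fin S → Fin A → Fin B → Fin S → ℝ)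
      (hardR (S := S) (A := A) (B := B))
      (fun _ a => if θ a = γ + 14 * (1 - γ) ^ 2 * ε / γ then
          ((Finset.univ.filter fun a' : Fin A =>
            θ a' = γ + 14 * (1 - γ) ^ 2 * ε / γ).card : ℝ)⁻¹ else 0)
      (fun _ b => if b.val = 0 then 1 else 0) ∧
    clipCoeff γ (hardP θ : Fin S → Fin A → Fin B → Fin S → ℝ)
      (fun s : Fin S => if s.val = 0 then 1 else 0)
      (fun (s : Fin S) (_ : Fin A) (_ : Fin B) =>
        if s.val = 0 then (C * (S : ℝ) * ((A : ℝ) + (B : ℝ)))⁻¹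
        else if s.val = 1 then
          (1 - (A : ℝ) * (B : ℝ) / (C * (S : ℝ) * ((A : ℝ) + (B : ℝ)))) / ((A : ℝ) * (B : ℝ))
        else 0)
      (fun (_ : Fin S) (a : Fin A) => if θ a = γ + 14 * (1 - γ) ^ 2 * ε / γ then
          ((Finset.univ.filter fun a' : Fin A =>
            θ a' = γ + 14 * (1 - γ) ^ 2 * ε / γ).card : ℝ)⁻¹ else 0)
      (fun (_ : Fin S) (b : Fin B) => if b.val = 0 then 1 else 0) = ENNReal.ofReal C := by
  have hγpos : (0:ℝ) < γ := by linarith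
  have hγ0 : (0:ℝ) ≤ γ := hγpos.le
  have h42 : (0:ℝ) < 42 * (1 - γ) := by linarith
  have hε1' : ε * (42 * (1 - γ)) ≤ 1 := (le_div_iff₀ h42).mp (by
    rw [div_eq_mul_inv, one_mul] at hε1 ⊢
    exact hε1)
  have hπ0 : 0 ≤ 14 * (1 - γ) ^ 2 * ε / γ := by positivity
  have hπle : 14 * (1 - γ) ^ 2 * ε / γ ≤ (1 - γ) / 2 := by
    rw [div_le_div_iff₀ hγpos (by norm_num : (0:ℝ) < 2)]
    nlinarith [hε1', sq_nonneg (1 - γ), hε0.le]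
  set p : ℝ := γ + 14 * (1 - γ) ^ 2 * ε / γ with hpdef
  have hp1 : p < 1 := by rw [hpdef]; linarith
  have hp0 : 0 ≤ p := by rw [hpdef]; linarith
  have hγp : γ ≤ p := by rw [hpdef]; linarith
  have hθ0 : ∀ a, 0 ≤ θ a := by
    intro a
    rcases hθ a with h | h <;> rw [h] <;> linarith
  have hθle : ∀ a, θ a ≤ p := by
    intro a
    rcases hθ a with h | h <;> rw [h, hpdef] <;> linarith
  have hθ1 : ∀ a, θ a ≤ 1 := fun a => (hθle a).trans hp1.le
  clear_value p
  clear hpdef hπ0 hπle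
  have hS0 : 0 < S := by omega
  have hS1 : 1 < S := by omega
  have hB0 : 0 < B := by omega
  set s0 : Fin S := ⟨0, hS0⟩ with hs0def
  set s1 : Fin S := ⟨1, hS1⟩ with hs1def
  set b0 : Fin B := ⟨0, hB0⟩ with hb0def
  set νs : Fin S → Fin B → ℝ := fun _ b => if b.val = 0 then 1 else 0 with hνsdef
  set μs : Fin S → Fin A → ℝ := fun _ a => if θ a = p then
      ((Finset.univ.filter fun a' : Fin A => θ a' = p).card : ℝ)⁻¹ else 0 with hμsdef
  have hνs' : IsPolicy νs := ZSHard.nustar_policy hB0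
  have hμs' : IsPolicy μs := ZSHard.mustar_policy hAp
  have hνs1 : νs s0 b0 = 1 := if_pos rfl
  have havg : (∑ a, μs s0 a * θ a) = p := ZSHard.mustar_avg hAp
  have hx2eq : p = 1 - νs s0 b0 * (1 - ∑ a, μs s0 a * θ a) := by
    rw [hνs1, havg]; ring
  have hP2 := ZSHard.pmat_eq hμs' hνs' s0 rfl b0 rfl p hx2eq
  have hV2 := ZSHard.vpol_eq hμs' hνs' hγ0 hγu hp0 hp1.le hP2 s0 rfl
  have hgp : 0 < 1 - γ * p := ZSHard.one_sub_gx_pos hγ0 hγu hp0 hp1.le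
  refine ⟨⟨hμs', hνs', ?_, ?_⟩, ?_⟩
  · -- max-player deviations
    intro μ hμ s
    have hx1eq : (∑ a, μ s0 a * θ a) = 1 - νs s0 b0 * (1 - ∑ a, μ s0 a * θ a) := by
      rw [hνs1]; ring
    have hx10 : 0 ≤ ∑ a, μ s0 a * θ a :=
      Finset.sum_nonneg fun a _ => mul_nonneg ((hμ s0).1 a) (hθ0 a)
    have hx1p : (∑ a, μ s0 a * θ a) ≤ p := by
      calc (∑ a, μ s0 a * θ a) ≤ ∑ a, μ s0 a * p :=
          Finset.sum_le_sum fun a _ => mul_le_mul_of_nonneg_left (hθle a) ((hμ s0).1 a)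
      _ = (∑ a, μ s0 a) * p := (Finset.sum_mul _ _ _).symm
      _ = p := by rw [(hμ s0).2, one_mul]
    have hx11 : (∑ a, μ s0 a * θ a) ≤ 1 := hx1p.trans hp1.le
    have hP1 := ZSHard.pmat_eq hμ hνs' s0 rfl b0 rfl _ hx1eq
    have hV1 := ZSHard.vpol_eq hμ hνs' hγ0 hγu hx10 hx11 hP1 s0 rfl
    rw [hV1, hV2]
    beta_reduce
    by_cases hs : s.val = 0
    · simp only [if_pos hs]
      apply inv_anti₀ hgp
      nlinarith [mul_le_mul_of_nonneg_left hx1p hγ0]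
    · simp only [if_neg hs]
      exact le_refl (0:ℝ)
  · -- min-player deviations
    intro ν hν s
    have hν0 : 0 ≤ ν s0 b0 := (hν s0).1 b0
    have hν1 : ν s0 b0 ≤ 1 := by
      have h := Finset.single_le_sum (fun b _ => (hν s0).1 b) (Finset.mem_univ b0)
      rw [(hν s0).2] at h
      exact h
    have hx3eq : 1 - ν s0 b0 * (1 - p) = 1 - ν s0 b0 * (1 - ∑ a, μs s0 a * θ a) := by
      rw [havg]
    have hprod : 0 ≤ (1 - ν s0 b0) * (1 - p) := mul_nonneg (by linarith) (by linarith)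
    have hprod2 : 0 ≤ ν s0 b0 * (1 - p) := mul_nonneg hν0 (by linarith)
    have hple : ν s0 b0 * (1 - p) ≤ 1 - p := by nlinarith [hprod]
    have hx30 : 0 ≤ 1 - ν s0 b0 * (1 - p) := by linarith
    have hx31 : 1 - ν s0 b0 * (1 - p) ≤ 1 := by linarith
    have hx3p : p ≤ 1 - ν s0 b0 * (1 - p) := by linarith
    have hP3 := ZSHard.pmat_eq hμs' hν s0 rfl b0 rfl _ hx3eq
    have hV3 := ZSHard.vpol_eq hμs' hν hγ0 hγu hx30 hx31 hP3 s0 rfl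
    rw [hV2, hV3]
    beta_reduce
    by_cases hs : s.val = 0
    · simp only [if_pos hs]
      have hgx3 : 0 < 1 - γ * (1 - ν s0 b0 * (1 - p)) :=
        ZSHard.one_sub_gx_pos hγ0 hγu hx30 hx31
      apply inv_anti₀ hgx3
      nlinarith [mul_le_mul_of_nonneg_left hx3p hγ0]
    · simp only [if_neg hs]
      exact le_refl (0:ℝ)
  · -- the clipped concentrability coefficient
    unfold clipCoeff
    simp only [Fintype.card_fin]
    have hSR : (2:ℝ) ≤ (S:ℝ) := by exact_mod_cast hS
    have hAR : (2:ℝ) ≤ (A:ℝ) := by exact_mod_cast hA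
    have hBR : (2:ℝ) ≤ (B:ℝ) := by exact_mod_cast hB
    have hden : (0:ℝ) < (S:ℝ) * ((A:ℝ) + (B:ℝ)) := by nlinarith
    have hCpos : (0:ℝ) < C := lt_of_lt_of_le (by positivity) hC
    apply le_antisymm
    · apply max_le
      · exact iSup_le fun μp => iSup_le fun s => iSup_le fun a => iSup_le fun b =>
          ZSHard.term_le hS hA hB hγ0 hγu hθ0 hθ1 μp.2 hνs' hC s a b
      · exact iSup_le fun νp => iSup_le fun s => iSup_le fun a => iSup_le fun b =>
          ZSHard.term_le hS hA hB hγ0 hγu hθ0 hθ1 hμs' νp.2 hC s a b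
    · obtain ⟨astar, hmem⟩ := hAp
      rw [Finset.mem_filter] at hmem
      have hastar : θ astar = p := hmem.2
      have hμh : IsPolicy (fun (_ : Fin S) (a : Fin A) => if a = astar then (1:ℝ) else 0) :=
        ZSHard.dirac_policy astar
      have havgh : (∑ a, (if a = astar then (1:ℝ) else 0) * θ a) = p :=
        (ZSHard.dirac_avg (θ := θ) astar s0).trans hastar
      have hxheq : p = 1 - νs s0 b0
          * (1 - ∑ a, (fun (_ : Fin S) (a : Fin A) => if a = astar then (1:ℝ) else 0) s0 a * θ a) := by
        beta_reduce
        rw [hνs1, havgh]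
        ring
      have hPh := ZSHard.pmat_eq hμh hνs' s0 rfl b0 rfl p hxheq
      have hdh := ZSHard.docc_eq hγ0 hγu hp0 hp1.le hPh s0 rfl s1 rfl
      refine le_trans ?_ (le_max_left _ _)
      refine le_iSup_of_le ⟨(fun (_ : Fin S) (a : Fin A) => if a = astar then (1:ℝ) else 0), hμh⟩ ?_
      refine le_iSup_of_le s0 ?_
      refine le_iSup_of_le astar ?_
      refine le_iSup_of_le b0 ?_
      rw [dOcc3, hdh]
      beta_reduce
      have hs0v : (s0 : Fin S).val = 0 := rfl
      simp only [hs0v, eq_self_iff_true, if_true]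
      rw [hνs1, mul_one, mul_one]
      have hd0 : (1:ℝ)/2 ≤ (1 - γ) * (1 - γ * p)⁻¹ := by
        rw [← div_eq_mul_inv, le_div_iff₀ hgp]
        nlinarith [mul_le_mul_of_nonneg_left hγp hγ0]
      have hK2 : ((S:ℝ) * ((A:ℝ) + (B:ℝ)))⁻¹ ≤ 1/2 := by
        have h2le : (2:ℝ) ≤ (S:ℝ) * ((A:ℝ) + (B:ℝ)) := by nlinarith
        calc ((S:ℝ) * ((A:ℝ) + (B:ℝ)))⁻¹ ≤ (2:ℝ)⁻¹ :=
            inv_anti₀ (by norm_num) h2le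
        _ = 1/2 := by norm_num
      have hmin : min ((1 - γ) * (1 - γ * p)⁻¹) (((S:ℝ) * ((A:ℝ) + (B:ℝ)))⁻¹)
          = ((S:ℝ) * ((A:ℝ) + (B:ℝ)))⁻¹ :=
        min_eq_right (le_trans hK2 hd0)
      rw [hmin]
      have hdb : (0:ℝ) < (C * (S:ℝ) * ((A:ℝ) + (B:ℝ)))⁻¹ := by positivity
      rw [← ENNReal.ofReal_div_of_pos hdb]
      apply le_of_eq
      congr 1
      rw [div_eq_mul_inv, inv_inv]
      field_simp
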